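/- Let N be a stable 3-pair network. If there exist an index h ∈ {1,2,3} and pairwise distinct i, j, l ∈ {1,2,3} such that h ∈ m_{i,j}^{l_1} ∩ m_{i,l}^{l_2} ∩ m_{j,l}^{l_3} for some l_1 ∈ {i,j}, l_2 ∈ {i,l}, l_3 ∈ {j,l}, then either {(h,i),(h,j)} ∉ S_N or {(h,i),(h,l)} ∉ S_N. -/

import Mathlib

open scoped BigOperators

/-- A `k`-pair network: a finite DAG with `k` sources of in-degree 0 and
`k` sinks of out-degree 0. -/
structure KPairNetwork (k : ℕ) where
  V : Type
  A : Type
  [fintypeV : Fintype V]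
  [fintypeA : Fintype A]
  [decEqV : DecidableEq V]
  [decEqA : DecidableEq A]
  tail : A → V
  head : A → V
  /-- acyclicity, via a topological ordering of the vertices -/
  acyclic : ∃ ord : V → ℕ, ∀ a : A, ord (tail a) < ord (head a)
  src : Fin k → V
  snk : Fin k → V
  src_inj : Function.Injective src
  snk_inj : Function.Injective snk
  src_no_in : ∀ (i : Fin k) (a : A), head a ≠ src i
  snk_no_out : ∀ (i : Fin k) (a : A), tail a ≠ snk i

attribute [instance] KPairNetwork.fintypeV KPairNetwork.fintypeA
attribute [instance] KPairNetwork.decEqV KPairNetwork.decEqA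

namespace KPairNetwork

variable {k : ℕ} (N : KPairNetwork k)

/-- `l` is (the list of arcs of) a directed path from `u` to `v`. -/
def IsPathFrom (u v : N.V) (l : List N.A) : Prop :=
  l ≠ [] ∧ l.Chain' (fun a b => N.head a = N.tail b) ∧
    (∀ a ∈ l.head?, N.tail a = u) ∧ (∀ a ∈ l.getLast?, N.head a = v)

/-- The vertices lying on a (nonempty) list of arcs. -/
def pathVerts (l : List N.A) : Set N.V :=
  {v | ∃ a ∈ l, v = N.tail a ∨ v = N.head a}

/-- `P i j` is a path from `s i` to `t j`, and for each sink `j` the `k`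
paths `P · j` are pairwise arc-disjoint (strong reachability). -/
def IsStrongSystem (P : Fin k → Fin k → List N.A) : Prop :=
  (∀ i j, N.IsPathFrom (N.src i) (N.snk j) (P i j)) ∧
    ∀ (j i i' : Fin k), i ≠ i' → ∀ a : N.A, a ∈ P i j → a ∉ P i' j

/-- Extra strong reachability: in addition, for each sink `j`, two distinct
paths towards `t j` share no vertex other than `t j`. -/
def IsExtraStrongSystem (P : Fin k → Fin k → List N.A) : Prop :=
  N.IsStrongSystem P ∧
    ∀ (j i i' : Fin k), i ≠ i' →
      ∀ v : N.V, v ∈ N.pathVerts (P i j) → v ∈ N.pathVerts (P i' j) → v = N.snk j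

/-- Stability: the choice of the `k` pairwise arc-disjoint paths towards each
sink is unique. -/
def IsStableSystem (P : Fin k → Fin k → List N.A) : Prop :=
  N.IsStrongSystem P ∧
    ∀ (j : Fin k) (Q : Fin k → List N.A),
      (∀ i, N.IsPathFrom (N.src i) (N.snk j) (Q i)) →
      (∀ i i', i ≠ i' → ∀ a : N.A, a ∈ Q i → a ∉ Q i') →
      ∀ i, Q i = P i j

/-- `excess_f(v) = Σ_{head a = v} f a − Σ_{tail a = v} f a`. -/
noncomputable def excess (f : N.A → ℝ) (v : N.V) : ℝ :=
  (∑ a : N.A, if N.head a = v then f a else 0) -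
    (∑ a : N.A, if N.tail a = v then f a else 0)

/-- An `u`–`v` flow: zero excess away from `u` and `v`. -/
def IsFlow (u v : N.V) (f : N.A → ℝ) : Prop :=
  ∀ w : N.V, w ≠ u → w ≠ v → N.excess f w = 0

/-- The unit flow along a path: `1` on its arcs and `0` elsewhere. -/
noncomputable def unitFlow (l : List N.A) : N.A → ℝ :=
  fun a => if a ∈ l then 1 else 0

/-- The set of source/sink index pairs whose path passes through the arc `a`. -/
def arcPattern (P : Fin k → Fin k → List N.A) (a : N.A) : Finset (Fin k × Fin k) :=
  Finset.univ.filter (fun q => a ∈ P q.1 q.2)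

/-- `S_N`, the family of index-pair patterns of the arcs of `N`. -/
def SN (P : Fin k → Fin k → List N.A) : Set (Finset (Fin k × Fin k)) :=
  {T | ∃ a : N.A, T = N.arcPattern P a}

/-! ### Segments and longest common segments -/

/-- A segment: a start vertex together with a (possibly empty) chained list of
arcs starting there.  A segment with no arcs is a single vertex. -/
def IsSeg (s : N.V × List N.A) : Prop :=
  s.2.Chain' (fun a b => N.head a = N.tail b) ∧ ∀ a ∈ s.2.head?, N.tail a = s.1

/-- The vertices of a segment. -/
def segVerts (s : N.V × List N.A) : Set N.V :=
  insert s.1 (N.pathVerts s.2)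

/-- The final vertex of a segment. -/
def segEnd (s : N.V × List N.A) : N.V :=
  s.2.getLast?.elim s.1 N.head

/-- The segment `s` lies on the path `p`. -/
def SegOn (s : N.V × List N.A) (p : List N.A) : Prop :=
  s.2 <:+: p ∧ s.1 ∈ N.pathVerts p

/-- The segment `s` is contained in the segment `s'`. -/
def SegLE (s s' : N.V × List N.A) : Prop :=
  s.2 <:+: s'.2 ∧ s.1 ∈ N.segVerts s'

/-- `s` is a longest common segment (l.c.s.) of the set of paths `ps`:
it is a segment common to all paths of `ps`, and no segment properly
containing it is common to all paths of `ps`. -/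
def IsLCS (ps : Set (List N.A)) (s : N.V × List N.A) : Prop :=
  N.IsSeg s ∧ (∀ p ∈ ps, N.SegOn s p) ∧
    ∀ s' : N.V × List N.A, N.IsSeg s' → N.SegLE s s' → s' ≠ s →
      ∃ p ∈ ps, ¬ N.SegOn s' p

/-- `s` is an l.c.s. of some pair `{P i j₁, P i' j₂}` and lies on `p`. -/
def IsPairLCSOn (P : Fin k → Fin k → List N.A) (j₁ j₂ : Fin k)
    (p : List N.A) (s : N.V × List N.A) : Prop :=
  (∃ i i' : Fin k, N.IsLCS {P i j₁, P i' j₂} s) ∧ N.SegOn s p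

/-- `ℓ^{j₁,j₂}(p)`: the number of l.c.s.'s of pairs `{P i j₁, P i' j₂}` lying
on the path `p`. -/
noncomputable def lcsCount (P : Fin k → Fin k → List N.A) (j₁ j₂ : Fin k)
    (p : List N.A) : ℕ :=
  Nat.card {s : N.V × List N.A | N.IsPairLCSOn P j₁ j₂ p s}

/-- `m_{j₁,j₂}^c = {i : ℓ^{j₁,j₂}(P_{s_i,t_c}) = 1}`. -/
def mset (P : Fin k → Fin k → List N.A) (j₁ j₂ c : Fin k) : Set (Fin k) :=
  {i | N.lcsCount P j₁ j₂ (P i c) = 1}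

/-- `u` lies strictly before `v` along the path `p` (there is a nonempty
infix of `p` going from `u` to `v`). -/
def StrictlyBeforeOn (p : List N.A) (u v : N.V) : Prop :=
  ∃ l : List N.A, l <:+: p ∧ l.head?.map N.tail = some u ∧ l.getLast?.map N.head = some v

/-- `e 0, …, e (L-1)` enumerates, in the order along `p`, the l.c.s.'s
`p(1) < p(2) < ⋯ < p(L)` of pairs `{P i j₁, P i' j₂}` lying on `p`. -/
def IsLCSEnum (P : Fin k → Fin k → List N.A) (j₁ j₂ : Fin k) (p : List N.A)
    (e : ℕ → N.V × List N.A) (L : ℕ) : Prop :=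
  (∀ n, n < L → N.IsPairLCSOn P j₁ j₂ p (e n)) ∧
  (∀ s, N.IsPairLCSOn P j₁ j₂ p s → ∃ n, n < L ∧ e n = s) ∧
  (∀ m n, m < n → n < L → N.StrictlyBeforeOn p (N.segEnd (e m)) (e n).1)

/-! ### Residual networks, regular cycles, semi-cycles and crossings -/

/-- `a` is a `P_{t_j}`-arc. -/
def isPArc (P : Fin k → Fin k → List N.A) (j : Fin k) (a : N.A) : Prop :=
  ∃ i, a ∈ P i j

/-- The tail of `a` in the `j`-th residual network `N_j` (in which all
`P_{t_j}`-arcs are reversed). -/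
def rtail (P : Fin k → Fin k → List N.A) (j : Fin k) (a : N.A) : N.V :=
  if ∃ i, a ∈ P i j then N.head a else N.tail a

/-- The head of `a` in the `j`-th residual network `N_j`. -/
def rhead (P : Fin k → Fin k → List N.A) (j : Fin k) (a : N.A) : N.V :=
  if ∃ i, a ∈ P i j then N.tail a else N.head a

/-- `l` is a directed cycle of the residual network `N_j`. -/
def IsResidCycle (P : Fin k → Fin k → List N.A) (j : Fin k) (l : List N.A) : Prop :=
  l ≠ [] ∧ l.Nodup ∧
  l.Chain' (fun a b => N.rhead P j a = N.rtail P j b) ∧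
  (∀ a ∈ l.getLast?, ∀ b ∈ l.head?, N.rhead P j a = N.rtail P j b) ∧
  (l.map (N.rtail P j)).Nodup

/-- A regular cycle of `N_j`: a directed cycle of `N_j` having no isolated
vertex of `P_{t_j}`, i.e. every vertex of the cycle lying on a path of
`P_{t_j}` is incident in the cycle to some (reversed) `P_{t_j}`-arc. -/
def IsRegularCycle (P : Fin k → Fin k → List N.A) (j : Fin k) (l : List N.A) : Prop :=
  N.IsResidCycle P j l ∧
    ∀ v ∈ l.map (N.rtail P j),
      (∃ i, v ∈ N.pathVerts (P i j)) →
      ∃ a ∈ l, N.isPArc P j a ∧ (v = N.tail a ∨ v = N.head a)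

/-- A `P_{t_j}`-semi-cycle of `N`: the arc set of a regular cycle of `N_j`,
with the original orientations of `N` restored. -/
def IsSemiCycle (P : Fin k → Fin k → List N.A) (j : Fin k) (E : Set N.A) : Prop :=
  ∃ l : List N.A, N.IsRegularCycle P j l ∧ E = {a | a ∈ l}

/-- A `P_{t_j}`-crossing of `N`: a `P_{t_j}`-semi-cycle with all its
`P_{t_j}`-arcs removed. -/
def IsCrossing (P : Fin k → Fin k → List N.A) (j : Fin k) (E : Set N.A) : Prop :=
  ∃ l : List N.A, N.IsRegularCycle P j l ∧ E = {a | a ∈ l ∧ ¬ N.isPArc P j a}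

end KPairNetwork


/-! ### Auxiliary lemmas for statement9 -/

private lemma list_chain'_pred {α : Type*} {R : α → α → Prop} :
    ∀ {l : List α} {a : α}, l.Chain' R → a ∈ l.tail → ∃ b ∈ l, R b a := by
  intro l
  induction l with
  | nil => simp
  | cons x xs ih =>
    intro a hc ha
    simp only [List.tail_cons] at ha
    cases xs with
    | nil => simp at ha
    | cons y ys =>
      rcases List.mem_cons.1 ha with rfl | ha'
      · exact ⟨x, List.mem_cons_self, (List.isChain_cons_cons.1 hc).1⟩
      · obtain ⟨b, hb, hr⟩ := ih (List.isChain_cons_cons.1 hc).2 ha'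
        exact ⟨b, List.mem_cons_of_mem _ hb, hr⟩

namespace KPairNetwork

variable {k : ℕ} (N : KPairNetwork k)

private lemma path_nodup {L : List N.A}
    (hc : L.Chain' (fun a b => N.head a = N.tail b)) : L.Nodup := by
  obtain ⟨ord, hord⟩ := N.acyclic
  have h1 : (L.map (fun a => ord (N.tail a))).Chain' (· < ·) := by
    show List.IsChain _ _
    rw [List.isChain_map]
    refine hc.imp ?_
    intro a b hab
    have := hord a
    rw [hab] at this
    exact this
  have h2 : (L.map (fun a => ord (N.tail a))).Pairwise (· < ·) :=
    List.isChain_iff_pairwise.1 h1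
  exact List.Nodup.of_map _ (h2.imp ne_of_lt)

private lemma pathVerts_mono {l l' : List N.A} (h : l <:+: l') :
    N.pathVerts l ⊆ N.pathVerts l' := by
  rintro v ⟨a, ha, hor⟩
  exact ⟨a, h.subset ha, hor⟩

private lemma segle_refl (s : N.V × List N.A) : N.SegLE s s :=
  ⟨List.infix_refl _, Set.mem_insert _ _⟩

private lemma segle_trans {s₁ s₂ s₃ : N.V × List N.A}
    (h12 : N.SegLE s₁ s₂) (h23 : N.SegLE s₂ s₃) : N.SegLE s₁ s₃ := by
  refine ⟨h12.1.trans h23.1, ?_⟩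
  rcases Set.mem_insert_iff.1 h12.2 with h | h
  · rw [h]; exact h23.2
  · exact Set.mem_insert_iff.2 (Or.inr (N.pathVerts_mono h23.1 h))

/-- If a segment weakly containing `s` has the same arc-list length as `s`,
it equals `s`. -/
private lemma seg_eq_of_le_of_length {s s'' : N.V × List N.A}
    (hs : N.IsSeg s) (hs'' : N.IsSeg s'') (hle : N.SegLE s s'')
    (hlen : s''.2.length ≤ s.2.length) : s'' = s := by
  have h2 : s.2 = s''.2 :=
    hle.1.eq_of_length (le_antisymm hle.1.length_le hlen)
  have h1 : s''.1 = s.1 := by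
    cases hh : s.2 with
    | nil =>
      have h2' : s''.2 = [] := by rw [← h2, hh]
      have := hle.2
      unfold segVerts at this
      rw [h2'] at this
      rcases Set.mem_insert_iff.1 this with h | h
      · exact h.symm
      · rcases h with ⟨a, ha, -⟩; simp at ha
    | cons a₀ rest =>
      have hA : N.tail a₀ = s.1 := hs.2 a₀ (by rw [hh]; rfl)
      have hB : N.tail a₀ = s''.1 := hs''.2 a₀ (by rw [← h2, hh]; rfl)
      rw [← hA, ← hB]
  exact Prod.ext h1 h2.symm

/-- Every common segment of a set of paths extends to a longest common
segment. -/
private lemma exists_lcs (ps : Set (List N.A)) (p₀ : List N.A) (hp₀ : p₀ ∈ ps) :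
    ∀ (n : ℕ) (s : N.V × List N.A), p₀.length - s.2.length ≤ n →
      N.IsSeg s → (∀ p ∈ ps, N.SegOn s p) →
      ∃ s', N.IsLCS ps s' ∧ N.SegLE s s' := by
  intro n
  induction n with
  | zero =>
    intro s hn hs hon
    refine ⟨s, ⟨hs, hon, ?_⟩, N.segle_refl s⟩
    intro s' h1 h2 h3
    by_contra hno
    push_neg at hno
    -- s' is strictly bigger; but lengths are capped by p₀
    have hlen : s.2.length < s'.2.length := by
      rcases lt_or_ge s.2.length s'.2.length with h | h
      · exact h
      · exact absurd (N.seg_eq_of_le_of_length hs h1 h2 h) h3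
    have hcap : s'.2.length ≤ p₀.length := (hno p₀ hp₀).1.length_le
    have hcap0 : s.2.length < p₀.length := lt_of_lt_of_le hlen hcap
    omega
  | succ n ih =>
    intro s hn hs hon
    by_cases hex : ∃ s'', N.IsSeg s'' ∧ N.SegLE s s'' ∧
        (∀ p ∈ ps, N.SegOn s'' p) ∧ s'' ≠ s
    · obtain ⟨s'', hs'', hle'', hon'', hne''⟩ := hex
      have hlen : s.2.length < s''.2.length := by
        rcases lt_or_ge s.2.length s''.2.length with h | h
        · exact h
        · exact absurd (N.seg_eq_of_le_of_length hs hs'' hle'' h) hne''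
      have hcap : s''.2.length ≤ p₀.length := (hon'' p₀ hp₀).1.length_le
      have hn' : p₀.length - s''.2.length ≤ n := by omega
      obtain ⟨s', hlcs, hle'⟩ := ih s'' hn' hs'' hon''
      exact ⟨s', hlcs, N.segle_trans hle'' hle'⟩
    · push_neg at hex
      refine ⟨s, ⟨hs, hon, ?_⟩, N.segle_refl s⟩
      intro s' h1 h2 h3
      by_contra hno
      push_neg at hno
      exact h3 (hex s' h1 h2 hno)

/-- A nonempty segment of a path `L` from the source `s_h` which contains
`s_h` among its vertices is a prefix of `L`. -/
private lemma seg_prefix {h : Fin k} {v : N.V} {L : List N.A}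
    {s : N.V × List N.A}
    (hpath : N.IsPathFrom (N.src h) v L) (hseg : N.IsSeg s)
    (hinf : s.2 <:+: L) (hsrc : N.src h ∈ N.segVerts s) (hne : s.2 ≠ []) :
    s.2 <+: L := by
  obtain ⟨hLne, hLch, hLhead, -⟩ := hpath
  have hnd : L.Nodup := N.path_nodup hLch
  -- find an arc a' ∈ s.2 with tail a' = src h
  have hex : ∃ a' ∈ s.2, N.tail a' = N.src h := by
    rcases Set.mem_insert_iff.1 hsrc with h1 | h1
    · -- src h = s.1 : the first arc of s.2 works
      cases hh : s.2 with
      | nil => exact absurd hh hne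
      | cons a₀ rest =>
        refine ⟨a₀, by simp [hh], ?_⟩
        have := hseg.2 a₀ (by rw [hh]; rfl)
        rw [this, h1]
    · rcases h1 with ⟨a', ha', hor⟩
      rcases hor with h2 | h2
      · exact ⟨a', ha', h2.symm⟩
      · exact absurd h2.symm (N.src_no_in h a')
  obtain ⟨a', ha's, ha't⟩ := hex
  have ha'L : a' ∈ L := hinf.subset ha's
  -- a' must be the first arc of L
  cases hL : L with
  | nil => exact absurd hL hLne
  | cons a₀ rest =>
    have ha₀ : a' = a₀ := by
      rw [hL] at ha'L
      rcases List.mem_cons.1 ha'L with h1 | h1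
      · exact h1
      · exfalso
        have : a' ∈ L.tail := by rw [hL]; exact h1
        obtain ⟨b, -, hb⟩ := list_chain'_pred hLch this
        rw [ha't] at hb
        exact N.src_no_in h b hb
    -- s.2 is an infix of L containing L's head, and L is nodup ⇒ prefix
    rw [← hL]
    obtain ⟨u, t, hut⟩ := hinf
    cases u with
    | nil => exact ⟨t, by simpa using hut⟩
    | cons y u' =>
      exfalso
      have hy : y = a₀ := by
        have : L = y :: (u' ++ s.2 ++ t) := by rw [← hut]; simp
        rw [hL] at this
        exact (List.cons.injEq _ _ _ _ ▸ this).1.symm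
      have hnd' : (y :: (u' ++ s.2 ++ t)).Nodup := by
        rw [show y :: (u' ++ s.2 ++ t) = (y :: u') ++ s.2 ++ t by simp, hut]
        exact hnd
      have : y ∉ u' ++ s.2 ++ t := (List.nodup_cons.1 hnd').1
      exact this (by
        rw [hy, ← ha₀]
        exact List.mem_append.2 (Or.inl (List.mem_append.2 (Or.inr ha's))))

/-- Key lemma: if `ℓ^{j₁,j₂}(P h c) = 1` for `c ∈ {j₁, j₂}` and `a` is an
arc common to `P h j₁` and `P h j₂`, then there is a common segment of the
two paths which is a prefix of `P h j₁`, an infix of `P h j₂`, and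
contains `a`. -/
private lemma key_lemma {P : Fin k → Fin k → List N.A}
    (hpaths : ∀ i j, N.IsPathFrom (N.src i) (N.snk j) (P i j))
    (h j₁ j₂ c : Fin k) (hc : c = j₁ ∨ c = j₂)
    (hcount : N.lcsCount P j₁ j₂ (P h c) = 1)
    (a : N.A) (ha₁ : a ∈ P h j₁) (ha₂ : a ∈ P h j₂) :
    ∃ S : N.V × List N.A, S.2 <+: P h j₁ ∧ S.2 <:+: P h j₂ ∧ a ∈ S.2 := by
  set ps : Set (List N.A) := {P h j₁, P h j₂} with hps
  have hp₁ : P h j₁ ∈ ps := Set.mem_insert _ _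
  have hp₂ : P h j₂ ∈ ps := Set.mem_insert_iff.2 (Or.inr rfl)
  have hpath₁ := hpaths h j₁
  have hpath₂ := hpaths h j₂
  -- src h lies on both paths
  have hsrcmem : ∀ {L : List N.A}, N.IsPathFrom (N.src h) (N.snk j₁) L ∨
      N.IsPathFrom (N.src h) (N.snk j₂) L → N.src h ∈ N.pathVerts L := by
    intro L hL
    have hL' : L ≠ [] ∧ (∀ b ∈ L.head?, N.tail b = N.src h) := by
      rcases hL with hL | hL
      · exact ⟨hL.1, hL.2.2.1⟩
      · exact ⟨hL.1, hL.2.2.1⟩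
    cases hh : L with
    | nil => exact absurd hh hL'.1
    | cons a₀ rest =>
      exact ⟨a₀, by simp [hh],
        Or.inl (hL'.2 a₀ (by rw [hh]; rfl)).symm⟩
  -- seed segments
  have hseed₀ : N.IsSeg (N.src h, ([] : List N.A)) := ⟨List.isChain_nil, by simp⟩
  have hon₀ : ∀ p ∈ ps, N.SegOn (N.src h, ([] : List N.A)) p := by
    intro p hp
    rcases hp with hp | hp
    · exact ⟨List.nil_infix, by rw [hp]; exact hsrcmem (Or.inl hpath₁)⟩
    · exact ⟨List.nil_infix, by rw [hp]; exact hsrcmem (Or.inr hpath₂)⟩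
  have hseeda : N.IsSeg (N.tail a, [a]) := ⟨List.isChain_singleton _, by simp⟩
  have hona : ∀ p ∈ ps, N.SegOn (N.tail a, [a]) p := by
    intro p hp
    have hmem : a ∈ p := by
      rcases hp with hp | hp
      · rw [hp]; exact ha₁
      · rw [hp]; exact ha₂
    obtain ⟨u, t, hut⟩ := List.append_of_mem hmem
    exact ⟨⟨u, t, by rw [hut]; simp⟩, ⟨a, hmem, Or.inl rfl⟩⟩
  obtain ⟨S₀, hS₀lcs, hS₀le⟩ :=
    N.exists_lcs ps (P h j₁) hp₁ (P h j₁).length _ (Nat.sub_le _ _) hseed₀ hon₀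
  obtain ⟨Sa, hSalcs, hSale⟩ :=
    N.exists_lcs ps (P h j₁) hp₁ (P h j₁).length _ (Nat.sub_le _ _) hseeda hona
  -- both are l.c.s.'s of the pair lying on P h c, and the count is 1
  have hmem₀ : N.IsPairLCSOn P j₁ j₂ (P h c) S₀ := by
    refine ⟨⟨h, h, hS₀lcs⟩, ?_⟩
    rcases hc with rfl | rfl
    · exact hS₀lcs.2.1 _ hp₁
    · exact hS₀lcs.2.1 _ hp₂
  have hmema : N.IsPairLCSOn P j₁ j₂ (P h c) Sa := by
    refine ⟨⟨h, h, hSalcs⟩, ?_⟩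
    rcases hc with rfl | rfl
    · exact hSalcs.2.1 _ hp₁
    · exact hSalcs.2.1 _ hp₂
  have hsub : Subsingleton {s : N.V × List N.A // N.IsPairLCSOn P j₁ j₂ (P h c) s} :=
    (Nat.card_eq_one_iff_unique.mp hcount).1
  have heq : S₀ = Sa := by
    have := @Subsingleton.elim _ hsub ⟨S₀, hmem₀⟩ ⟨Sa, hmema⟩
    exact congrArg Subtype.val this
  -- Sa contains a and src h, is an infix of both paths ⇒ prefix of P h j₁
  have haS : a ∈ Sa.2 := (hSale.1).subset List.mem_cons_self
  have hsrcS : N.src h ∈ N.segVerts Sa := by rw [← heq]; exact hS₀le.2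
  have hinf₁ : Sa.2 <:+: P h j₁ := (hSalcs.2.1 _ hp₁).1
  have hinf₂ : Sa.2 <:+: P h j₂ := (hSalcs.2.1 _ hp₂).1
  have hne : Sa.2 ≠ [] := fun hh => by rw [hh] at haS; simp at haS
  exact ⟨Sa, N.seg_prefix hpath₁ hSalcs.1 hinf₁ hsrcS hne, hinf₂, haS⟩

end KPairNetwork

/-- Lemma 6 of the paper: in a stable 3-pair network, if
`h ∈ m_{i,j}^{l₁} ∩ m_{i,l}^{l₂} ∩ m_{j,l}^{l₃}` for some `l₁ ∈ {i,j}`,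
`l₂ ∈ {i,l}`, `l₃ ∈ {j,l}` and pairwise distinct `i, j, l`, then
`{(h,i),(h,j)} ∉ S_N` or `{(h,i),(h,l)} ∉ S_N`. -/
theorem statement9 (N : KPairNetwork 3) (P : Fin 3 → Fin 3 → List N.A)
    (hP : N.IsStableSystem P)
    (h i j l : Fin 3) (hij : i ≠ j) (hil : i ≠ l) (hjl : j ≠ l)
    (l₁ l₂ l₃ : Fin 3)
    (hl₁ : l₁ = i ∨ l₁ = j) (hl₂ : l₂ = i ∨ l₂ = l) (hl₃ : l₃ = j ∨ l₃ = l)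
    (hh₁ : h ∈ N.mset P i j l₁) (hh₂ : h ∈ N.mset P i l l₂)
    (hh₃ : h ∈ N.mset P j l l₃) :
    ({(h, i), (h, j)} : Finset (Fin 3 × Fin 3)) ∉ N.SN P ∨
      ({(h, i), (h, l)} : Finset (Fin 3 × Fin 3)) ∉ N.SN P := by
  by_contra hcon
  push_neg at hcon
  obtain ⟨hSN₁, hSN₂⟩ := hcon
  obtain ⟨a, hA⟩ := hSN₁
  obtain ⟨b, hB⟩ := hSN₂
  have hpaths := hP.1.1
  -- arc memberships from the patterns
  have memA : ∀ q : Fin 3 × Fin 3, q ∈ N.arcPattern P a ↔ a ∈ P q.1 q.2 := by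
    intro q; simp [KPairNetwork.arcPattern]
  have memB : ∀ q : Fin 3 × Fin 3, q ∈ N.arcPattern P b ↔ b ∈ P q.1 q.2 := by
    intro q; simp [KPairNetwork.arcPattern]
  have hai : a ∈ P h i := (memA (h, i)).1 (hA ▸ (by simp))
  have haj : a ∈ P h j := (memA (h, j)).1 (hA ▸ (by simp))
  have hal : a ∉ P h l := by
    intro hmem
    have : ((h, l) : Fin 3 × Fin 3) ∈ ({(h, i), (h, j)} : Finset (Fin 3 × Fin 3)) :=
      hA ▸ ((memA (h, l)).2 hmem)
    simp [Prod.ext_iff] at this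
    rcases this with h1 | h1
    · exact hil h1.symm
    · exact hjl h1.symm
  have hbi : b ∈ P h i := (memB (h, i)).1 (hB ▸ (by simp))
  have hbl : b ∈ P h l := (memB (h, l)).1 (hB ▸ (by simp))
  have hbj : b ∉ P h j := by
    intro hmem
    have : ((h, j) : Fin 3 × Fin 3) ∈ ({(h, i), (h, l)} : Finset (Fin 3 × Fin 3)) :=
      hB ▸ ((memB (h, j)).2 hmem)
    simp [Prod.ext_iff] at this
    rcases this with h1 | h1
    · exact hij h1.symm
    · exact hjl h1
  -- counts
  have hc₁ : N.lcsCount P i j (P h l₁) = 1 := hh₁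
  have hc₂ : N.lcsCount P i l (P h l₂) = 1 := hh₂
  obtain ⟨S, hSpre, hSinf, haS⟩ :=
    N.key_lemma hpaths h i j l₁ hl₁ hc₁ a hai haj
  obtain ⟨T, hTpre, hTinf, hbT⟩ :=
    N.key_lemma hpaths h i l l₂ hl₂ hc₂ b hbi hbl
  rcases List.prefix_or_prefix_of_prefix hSpre hTpre with hpp | hpp
  · exact hal (hTinf.subset (hpp.subset haS))
  · exact hbj (hSinf.subset (hpp.subset hbT))
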